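/- Let M be a positive integer and suppose C(M, j) and C(M, j') are two consecutive odd entries in row M, i.e., C(M, j) and C(M, j') are odd with j < j' and C(M, i) is even for all j < i < j'. Then j' - j - 1, the number of even entries strictly between them, is of the form 2^{l_g} - 2^{l_{g-1}} - ... - 2^{l_1} - 1 for some g in {1, ..., m}, where M = 2^{l_m} + ... + 2^{l_1} is the binary expansion of M with l_m > ... > l_1. -/

import Mathlib

open Finset

private lemma submask_le {x y : ℕ} (h : ∀ i, x.testBit i = true → y.testBit i = true) :
    x ≤ y := by
  have hxy : x &&& y = x := by
    apply Nat.eq_of_testBit_eq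
    intro i
    rw [Nat.testBit_and]
    cases hx : x.testBit i with
    | false => simp
    | true => simp [h i hx]
  calc x = x &&& y := hxy.symm
    _ ≤ y := Nat.and_le_right

private lemma odd_choose_iff (n k : ℕ) :
    Odd (n.choose k) ↔ ∀ i, k.testBit i = true → n.testBit i = true := by
  induction n using Nat.strong_induction_on generalizing k with
  | _ n ih =>
  rcases Nat.eq_zero_or_pos n with h0 | hpos
  · subst h0
    constructor
    · intro hodd i hik
      have hk : k = 0 := by
        by_contra hk
        have : Nat.choose 0 k = 0 := Nat.choose_eq_zero_of_lt (Nat.pos_of_ne_zero hk)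
        simp [this] at hodd
      subst hk
      simp [Nat.testBit] at hik
    · intro h
      have hk : k = 0 := by
        apply Nat.eq_of_testBit_eq
        intro i
        cases hki : k.testBit i with
        | false => simp [Nat.zero_testBit]
        | true =>
          have := h i hki
          simp [Nat.zero_testBit] at this
      subst hk
      simp
  · haveI : Fact (Nat.Prime 2) := ⟨Nat.prime_two⟩
    have key := Choose.choose_modEq_choose_mod_mul_choose_div_nat (p := 2) (n := n) (k := k)
    have ih2 := ih (n / 2) (Nat.div_lt_self hpos one_lt_two) (k := k / 2)
    have hmod : Odd (Nat.choose (n % 2) (k % 2)) ↔ (k % 2 = 1 → n % 2 = 1) := by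
      rcases Nat.mod_two_eq_zero_or_one n with h | h <;>
        rcases Nat.mod_two_eq_zero_or_one k with h' | h' <;>
          rw [h, h'] <;> simp <;> decide
    rw [Nat.odd_iff, key, ← Nat.odd_iff, Nat.odd_mul, hmod, ih2]
    constructor
    · rintro ⟨h1, h2⟩ i hb
      cases i with
      | zero =>
        rw [Nat.testBit_zero] at hb ⊢
        simp only [decide_eq_true_eq] at hb ⊢
        exact h1 hb
      | succ i =>
        rw [Nat.testBit_succ] at hb ⊢
        exact h2 i hb
    · intro h
      refine ⟨fun hk => ?_, fun i hb => ?_⟩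
      · have := h 0 (by rw [Nat.testBit_zero]; simp [hk])
        rw [Nat.testBit_zero] at this
        simpa using this
      · have := h (i + 1) (by rw [Nat.testBit_succ]; exact hb)
        rw [Nat.testBit_succ] at this
        exact this

private lemma sum_filter_testBit (M e : ℕ) :
    ∑ i ∈ (Finset.range e).filter (fun i => Nat.testBit M i), 2 ^ i = M % 2 ^ e := by
  induction e with
  | zero => simp [Nat.mod_one]
  | succ e ih =>
    rw [Finset.range_add_one, Finset.filter_insert, Nat.mod_pow_succ]
    have hbit : Nat.testBit M e = decide (M / 2 ^ e % 2 = 1) := Nat.testBit_eq_decide_div_mod_eq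
    have h2 : M / 2 ^ e % 2 < 2 := Nat.mod_lt _ (by norm_num)
    by_cases h : Nat.testBit M e
    · rw [if_pos h, Finset.sum_insert (by simp)]
      have h1 : M / 2 ^ e % 2 = 1 := by
        rw [hbit] at h; simpa using h
      rw [ih, h1]
      ring
    · rw [if_neg h]
      have h1 : M / 2 ^ e % 2 = 0 := by
        rw [hbit] at h
        simp at h
        omega
      rw [ih, h1]
      ring

/-- If `C(M,j)` and `C(M,j')` are two consecutive odd entries in row `M` of Pascal's
triangle (only even entries strictly between them), then the number `j' - j - 1` of even
entries strictly between them equals `2^{l_g} - 2^{l_{g-1}} - ⋯ - 2^{l_1} - 1` for some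
exponent `l_g` appearing in the binary expansion of `M`, where `l_{g-1}, …, l_1` are
exactly the smaller exponents appearing in the binary expansion of `M`. -/
theorem gap_between_consecutive_odds (M j j' : ℕ) (hM : 0 < M)
    (hjj' : j < j') (hj'M : j' ≤ M)
    (hj : Odd (Nat.choose M j)) (hj' : Odd (Nat.choose M j'))
    (hbetween : ∀ i, j < i → i < j' → Even (Nat.choose M i)) :
    ∃ e : ℕ, Nat.testBit M e = true ∧
      j' - j - 1 =
        2 ^ e - (∑ i ∈ (Finset.range e).filter (fun i => Nat.testBit M i), 2 ^ i) - 1 := by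
  classical
  have hSj : ∀ i, j.testBit i = true → M.testBit i = true := (odd_choose_iff M j).mp hj
  have hSj' : ∀ i, j'.testBit i = true → M.testBit i = true := (odd_choose_iff M j').mp hj'
  have hjM : j < M := lt_of_lt_of_le hjj' hj'M
  have hex : ∃ e, M.testBit e = true ∧ j.testBit e = false := by
    by_contra h
    push_neg at h
    have : M = j := by
      apply Nat.eq_of_testBit_eq
      intro i
      cases hji : j.testBit i with
      | true => rw [hSj i hji]
      | false =>
        cases hMi : M.testBit i with
        | false => rfl
        | true => exact absurd hji (h i hMi)
    omega
  set e := Nat.find hex with he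
  obtain ⟨hMe, hje⟩ := Nat.find_spec hex
  have hmin : ∀ i, i < e → j.testBit i = M.testBit i := by
    intro i hi
    cases hji : j.testBit i with
    | true => exact (hSj i hji).symm
    | false =>
      cases hMi : M.testBit i with
      | false => rfl
      | true => exact absurd ⟨hMi, hji⟩ (Nat.find_min hex hi)
  have hpe : 0 < 2 ^ e := Nat.two_pow_pos e
  have hmodeq : j % 2 ^ e = M % 2 ^ e := by
    apply Nat.eq_of_testBit_eq
    intro i
    rw [Nat.testBit_mod_two_pow, Nat.testBit_mod_two_pow]
    by_cases hi : i < e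
    · simp [hi, hmin i hi]
    · simp [hi]
  set a := j / 2 ^ e with ha
  have hadiv : 2 ^ e * a + j % 2 ^ e = j := Nat.div_add_mod j (2 ^ e)
  have haeven : a % 2 = 0 := by
    have hb : j.testBit e = decide (j / 2 ^ e % 2 = 1) := Nat.testBit_eq_decide_div_mod_eq
    rw [hje] at hb
    have : ¬ (a % 2 = 1) := by
      intro h1
      rw [← ha] at hb
      simp [h1] at hb
    omega
  set c := 2 ^ e * (a + 1) with hc
  have hceq2 : c = 2 ^ e * a + 2 ^ e := by rw [hc]; ring
  have hrlt : j % 2 ^ e < 2 ^ e := Nat.mod_lt _ hpe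
  have hjc : j < c := by omega
  -- c is a submask of M
  have hSc : ∀ i, c.testBit i = true → M.testBit i = true := by
    intro i hbit
    rcases lt_trichotomy i e with hi | hi | hi
    · exfalso
      have hsplit : 2 ^ e = 2 ^ i * 2 ^ (e - i) := by
        rw [← pow_add]
        congr 1
        omega
      have hdiv : c / 2 ^ i = 2 ^ (e - i) * (a + 1) := by
        rw [hc, hsplit, mul_assoc, Nat.mul_div_cancel_left _ (Nat.two_pow_pos i)]
      have hev : c / 2 ^ i % 2 = 0 := by
        rw [hdiv]
        have hdvd : 2 ∣ 2 ^ (e - i) * (a + 1) :=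
          dvd_mul_of_dvd_left (dvd_pow_self 2 (by omega : e - i ≠ 0)) _
        omega
      have hb : c.testBit i = decide (c / 2 ^ i % 2 = 1) := Nat.testBit_eq_decide_div_mod_eq
      rw [hbit] at hb
      rw [hev] at hb
      simp at hb
    · rw [hi]; exact hMe
    · -- for i > e : c / 2^i = j / 2^i
      have hsplit : 2 ^ i = 2 ^ e * 2 ^ (i - e) := by
        rw [← pow_add]
        congr 1
        omega
      have h1 : c / 2 ^ i = (a + 1) / 2 ^ (i - e) := by
        rw [hc, hsplit, ← Nat.div_div_eq_div_mul,
          Nat.mul_div_cancel_left _ (Nat.two_pow_pos e)]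
      have h2 : j / 2 ^ i = a / 2 ^ (i - e) := by
        rw [ha, Nat.div_div_eq_div_mul, ← pow_add]
        congr 2
        omega
      have h3 : (a + 1) / 2 ^ (i - e) = a / 2 ^ (i - e) := by
        have : ∃ s, i - e = s + 1 := ⟨i - e - 1, by omega⟩
        obtain ⟨s, hs⟩ := this
        rw [hs, pow_succ, mul_comm, ← Nat.div_div_eq_div_mul, ← Nat.div_div_eq_div_mul]
        congr 1
        omega
      have hcj : c / 2 ^ i = j / 2 ^ i := by rw [h1, h3, ← h2]
      have hb : c.testBit i = decide (c / 2 ^ i % 2 = 1) := Nat.testBit_eq_decide_div_mod_eq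
      have hb' : j.testBit i = decide (j / 2 ^ i % 2 = 1) := Nat.testBit_eq_decide_div_mod_eq
      apply hSj
      rw [hb', ← hcj, ← hb, hbit]
  have hcM_odd : Odd (Nat.choose M c) := (odd_choose_iff M c).mpr hSc
  -- j' ≥ c
  have hj'mod : j' % 2 ^ e ≤ j % 2 ^ e := by
    rw [hmodeq]
    apply submask_le
    intro i hbit
    rw [Nat.testBit_mod_two_pow] at hbit ⊢
    simp only [Bool.and_eq_true, decide_eq_true_eq] at hbit ⊢
    exact ⟨hbit.1, hSj' i hbit.2⟩
  have hcj' : c ≤ j' := by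
    have h1 : 2 ^ e * (j' / 2 ^ e) + j' % 2 ^ e = j' := Nat.div_add_mod j' (2 ^ e)
    have h2 : a < j' / 2 ^ e := by
      by_contra hle
      push_neg at hle
      have : 2 ^ e * (j' / 2 ^ e) ≤ 2 ^ e * a := Nat.mul_le_mul_left _ hle
      omega
    have h3 : a + 1 ≤ j' / 2 ^ e := h2
    calc c = 2 ^ e * (a + 1) := hc
      _ ≤ 2 ^ e * (j' / 2 ^ e) := Nat.mul_le_mul_left _ h3
      _ ≤ j' := by omega
  have hceq : c = j' := by
    rcases eq_or_lt_of_le hcj' with h | h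
    · exact h
    · exact absurd hcM_odd (Nat.not_odd_iff_even.mpr (hbetween c hjc h))
  refine ⟨e, hMe, ?_⟩
  rw [sum_filter_testBit, ← hmodeq]
  omega
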